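/- Let d be a positive integer, let a, b : Fin d → ℝ be Boolean vectors (each coordinate equal to 0 or 1), and define plane curves π, σ by π_i = (3i, 1 + 2a_i) and σ_i = (3i, 2 − 2b_i) for 1 ≤ i ≤ d. Then for every traversal (i_1, j_1), …, (i_T, j_T) of π and σ, max_{1 ≤ t ≤ T} ‖π_{i_t} − σ_{j_t}‖ ≥ 1; and if moreover ⟨a, b⟩ ≠ 0, then max_{1 ≤ t ≤ T} ‖π_{i_t} − σ_{j_t}‖ ≥ 3. -/

import Mathlib

/-- A traversal of two curves of length `d`: a sequence `f 1, …, f T` of index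
pairs in `{1,…,d}²` with `f 1 = (1,1)`, `f T = (d,d)`, where at each step the
first index advances, the second advances, or both advance together. -/
def IsTraversal (d T : ℕ) (f : ℕ → ℕ × ℕ) : Prop :=
  1 ≤ T ∧ f 1 = (1, 1) ∧ f T = (d, d) ∧
  (∀ t, 1 ≤ t → t ≤ T →
    1 ≤ (f t).1 ∧ (f t).1 ≤ d ∧ 1 ≤ (f t).2 ∧ (f t).2 ≤ d) ∧
  (∀ t, 1 ≤ t → t < T →
    f (t + 1) = ((f t).1 + 1, (f t).2) ∨
    f (t + 1) = ((f t).1, (f t).2 + 1) ∨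
    f (t + 1) = ((f t).1 + 1, (f t).2 + 1))

lemma coord_le_norm (x : EuclideanSpace ℝ (Fin 2)) (i : Fin 2) : |x i| ≤ ‖x‖ := by
  rw [EuclideanSpace.norm_eq, ← Real.sqrt_sq_eq_abs]
  apply Real.sqrt_le_sqrt
  rw [show x i ^ 2 = ‖x i‖ ^ 2 by simp [sq_abs]]
  exact Finset.single_le_sum (f := fun j => ‖x j‖ ^ 2) (fun j _ => by positivity)
    (Finset.mem_univ i)

lemma discrete_ivt (g : ℕ → ℕ) (T k : ℕ) (hT : 1 ≤ T) (h1 : g 1 ≤ k) (h2 : k ≤ g T)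
    (hstep : ∀ t, 1 ≤ t → t < T → g (t + 1) ≤ g t + 1) :
    ∃ t, 1 ≤ t ∧ t ≤ T ∧ g t = k := by
  induction T with
  | zero => omega
  | succ T ih =>
    rcases Nat.eq_zero_or_pos T with rfl | hT'
    · norm_num at h2 ⊢
      exact ⟨1, le_rfl, le_rfl, by omega⟩
    · rcases le_or_gt k (g T) with hk | hk
      · obtain ⟨t, ht1, ht2, ht3⟩ := ih hT' hk (fun t h1 h2 => hstep t h1 (by omega))
        exact ⟨t, ht1, by omega, ht3⟩
      · have := hstep T hT' (by omega)
        exact ⟨T + 1, by omega, le_refl _, by omega⟩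

/-- **Every traversal of the embedded curves costs at least 1, and at least 3
for non-orthogonal vectors.**
For Boolean vectors `a, b : Fin d → ℝ` and the plane curves with vertices
`π i = (3i, 1 + 2 aᵢ)`, `σ i = (3i, 2 - 2 bᵢ)` for `1 ≤ i ≤ d`, every traversal
`f` has `max_{1 ≤ t ≤ T} ‖π (f t).1 - σ (f t).2‖ ≥ 1`; if moreover `⟨a, b⟩ ≠ 0`
then this maximum is at least `3`. -/
theorem traversal_cost_lower_bounds (d : ℕ) (hd : 0 < d) (a b : Fin d → ℝ)
    (ha : ∀ i, a i = 0 ∨ a i = 1) (hb : ∀ i, b i = 0 ∨ b i = 1)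
    (π σ : ℕ → EuclideanSpace ℝ (Fin 2))
    (hπ : ∀ (i : ℕ) (h1 : 1 ≤ i) (h2 : i ≤ d),
      π i = ![3 * (i : ℝ), 1 + 2 * a ⟨i - 1, by omega⟩])
    (hσ : ∀ (i : ℕ) (h1 : 1 ≤ i) (h2 : i ≤ d),
      σ i = ![3 * (i : ℝ), 2 - 2 * b ⟨i - 1, by omega⟩])
    (T : ℕ) (f : ℕ → ℕ × ℕ) (hf : IsTraversal d T f)
    (hT : 1 ≤ T) :
    1 ≤ (Finset.Icc 1 T).sup' (Finset.nonempty_Icc.mpr hT)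
        (fun t => ‖π (f t).1 - σ (f t).2‖) ∧
    ((∑ i, a i * b i) ≠ 0 →
      3 ≤ (Finset.Icc 1 T).sup' (Finset.nonempty_Icc.mpr hT)
        (fun t => ‖π (f t).1 - σ (f t).2‖)) := by
  obtain ⟨-, hf1, hfT, hbnd, hstep⟩ := hf
  have core : ∀ i j (h1i : 1 ≤ i) (h2i : i ≤ d) (h1j : 1 ≤ j) (h2j : j ≤ d),
      (π i - σ j) 0 = 3 * i - 3 * j ∧
      (π i - σ j) 1 = 2 * a ⟨i - 1, by omega⟩ + 2 * b ⟨j - 1, by omega⟩ - 1 := by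
    intro i j h1i h2i h1j h2j
    rw [PiLp.sub_apply, PiLp.sub_apply, hπ i h1i h2i, hσ j h1j h2j]
    constructor <;> · simp [PiLp.sub_apply]; try ring
  constructor
  · have h1mem : (1 : ℕ) ∈ Finset.Icc 1 T := Finset.mem_Icc.mpr ⟨le_rfl, hT⟩
    refine le_trans ?_ (Finset.le_sup' (fun t => ‖π (f t).1 - σ (f t).2‖) h1mem)
    obtain ⟨hb1, hb2, hb3, hb4⟩ := hbnd 1 le_rfl hT
    obtain ⟨-, hc⟩ := core (f 1).1 (f 1).2 hb1 hb2 hb3 hb4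
    refine le_trans ?_ (le_trans (le_of_eq (congrArg _ hc.symm))
      (coord_le_norm (π (f 1).1 - σ (f 1).2) 1))
    rcases ha ⟨(f 1).1 - 1, by omega⟩ with h | h <;>
      rcases hb ⟨(f 1).2 - 1, by omega⟩ with h' | h' <;>
      rw [h, h'] <;> norm_num
  · intro hip
    obtain ⟨i0, -, hi0⟩ := Finset.exists_ne_zero_of_sum_ne_zero hip
    have hai : a i0 = 1 := by rcases ha i0 with h | h <;> simp [h] at hi0 ⊢
    have hbi : b i0 = 1 := by rcases hb i0 with h | h <;> simp [h] at hi0 ⊢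
    set k : ℕ := i0.1 + 1 with hkdef
    have hk1 : 1 ≤ k := by omega
    have hk2 : k ≤ d := by have := i0.2; omega
    obtain ⟨t, ht1, ht2, ht3⟩ := discrete_ivt (fun t => (f t).1) T k hT
      (by show (f 1).1 ≤ k; rw [hf1]; exact hk1) (by show k ≤ (f T).1; rw [hfT]; exact hk2)
      (by
        intro t h1 h2
        show (f (t + 1)).1 ≤ (f t).1 + 1
        rcases hstep t h1 h2 with h | h | h <;> rw [h] <;> simp)
    have htmem : t ∈ Finset.Icc 1 T := Finset.mem_Icc.mpr ⟨ht1, ht2⟩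
    refine le_trans ?_ (Finset.le_sup' (fun t => ‖π (f t).1 - σ (f t).2‖) htmem)
    obtain ⟨hb1, hb2, hb3, hb4⟩ := hbnd t ht1 ht2
    obtain ⟨hc0, hc1⟩ := core (f t).1 (f t).2 hb1 hb2 hb3 hb4
    have hik : (f t).1 = k := ht3
    rcases eq_or_ne (f t).2 k with hjk | hjk
    · refine le_trans ?_ (coord_le_norm (π (f t).1 - σ (f t).2) 1)
      rw [hc1]
      have e1 : (⟨(f t).1 - 1, by omega⟩ : Fin d) = i0 := Fin.ext (by simp only [Fin.val_mk]; omega)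
      have e2 : (⟨(f t).2 - 1, by omega⟩ : Fin d) = i0 := Fin.ext (by simp only [Fin.val_mk]; omega)
      rw [e1, e2, hai, hbi]
      norm_num
    · refine le_trans ?_ (coord_le_norm (π (f t).1 - σ (f t).2) 0)
      rw [hc0]
      rcases Nat.lt_or_ge (f t).2 k with h | h
      · have : ((f t).2 : ℝ) + 1 ≤ k := by exact_mod_cast h
        calc (3 : ℝ) ≤ 3 * (f t).1 - 3 * (f t).2 := by rw [hik]; linarith
          _ ≤ |3 * ((f t).1 : ℝ) - 3 * (f t).2| := le_abs_self _
      · have hlt : k < (f t).2 := by omega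
        have : (k : ℝ) + 1 ≤ (f t).2 := by exact_mod_cast hlt
        calc (3 : ℝ) ≤ -(3 * (f t).1 - 3 * (f t).2) := by rw [hik]; linarith
          _ ≤ |3 * ((f t).1 : ℝ) - 3 * (f t).2| := neg_le_abs _
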